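/- For every C² embedding α : [a,b] → ℝⁿ and every ε > 0, there exists a polynomial map β : [a,b] → ℝⁿ (each component a real polynomial) that is injective with nonvanishing derivative on [a,b] and satisfies |α(t) - β(t)| < ε and |α'(t) - β'(t)| < ε for all t ∈ [a,b]. -/

import Mathlib

open Set Polynomial

noncomputable def antider (q : ℝ[X]) : ℝ[X] := q.sum fun k c => C (c/(k+1)) * X^(k+1)

lemma antider_derivative (q : ℝ[X]) : (antider q).derivative = q := by
  unfold antider
  rw [Polynomial.sum_def, map_sum]
  have : ∀ k ∈ q.support, Polynomial.derivative (C (q.coeff k/(k+1)) * X^(k+1))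
      = C (q.coeff k) * X ^ k := by
    intro k _
    rw [Polynomial.derivative_C_mul, Polynomial.derivative_X_pow]
    have hk : ((k:ℝ)+1) ≠ 0 := by positivity
    rw [Nat.add_sub_cancel, ← mul_assoc, ← Polynomial.C_mul]
    push_cast
    rw [div_mul_cancel₀ _ hk]
  rw [Finset.sum_congr rfl this]
  conv_rhs => rw [← Polynomial.sum_C_mul_X_pow_eq q]
  rw [Polynomial.sum_def]

lemma euc_norm_le {n : ℕ} (v : EuclideanSpace ℝ (Fin n)) {r : ℝ} (hr : 0 ≤ r)
    (h : ∀ i, |v i| ≤ r) : ‖v‖ ≤ Real.sqrt n * r := by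
  rw [EuclideanSpace.norm_eq]
  have h1 : ∑ i, ‖v i‖ ^ 2 ≤ ∑ _i : Fin n, r ^ 2 := by
    refine Finset.sum_le_sum fun i _ => ?_
    have := h i
    rw [Real.norm_eq_abs]
    nlinarith [abs_nonneg (v i)]
  calc Real.sqrt (∑ i, ‖v i‖ ^ 2) ≤ Real.sqrt (n * r^2) := by
        refine Real.sqrt_le_sqrt ?_
        simpa using h1
    _ = Real.sqrt n * r := by
        rw [Real.sqrt_mul (by positivity), Real.sqrt_sq hr]

set_option maxHeartbeats 1000000 in
theorem stmt_5 (n : ℕ) (a b : ℝ) (hab : a ≤ b)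
    (α : ℝ → EuclideanSpace ℝ (Fin n))
    (hα : ContDiff ℝ 2 α)
    (hαinj : InjOn α (Icc a b))
    (hα' : ∀ t ∈ Icc a b, deriv α t ≠ 0)
    (ε : ℝ) (hε : 0 < ε) :
    ∃ (P : Fin n → Polynomial ℝ) (β : ℝ → EuclideanSpace ℝ (Fin n)),
      (∀ t, β t = fun i => (P i).eval t) ∧
      InjOn β (Icc a b) ∧
      (∀ t ∈ Icc a b, deriv β t ≠ 0) ∧
      (∀ t ∈ Icc a b, ‖α t - β t‖ < ε ∧ ‖deriv α t - deriv β t‖ < ε) := by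
  have hαd : Differentiable ℝ α := hα.differentiable two_ne_zero
  have hderc : Continuous (deriv α) := hα.continuous_deriv one_le_two
  have haI : a ∈ Icc a b := ⟨le_refl a, hab⟩
  -- minimum of the derivative norm
  obtain ⟨t₀, ht₀, hmin⟩ := isCompact_Icc.exists_isMinOn ⟨a, haI⟩
    (continuous_norm.comp hderc).continuousOn
  set m := ‖deriv α t₀‖ with hm
  have hm0 : 0 < m := norm_pos_iff.mpr (hα' t₀ ht₀)
  have hmle : ∀ t ∈ Icc a b, m ≤ ‖deriv α t‖ := fun t ht => hmin ht
  -- uniform continuity of the derivative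
  have hUC : UniformContinuousOn (deriv α) (Icc a b) :=
    isCompact_Icc.uniformContinuousOn_of_continuous hderc.continuousOn
  rw [Metric.uniformContinuousOn_iff] at hUC
  obtain ⟨η, hη0, hηp⟩ := hUC (m/2) (by linarith)
  -- local lower bound
  have hloc : ∀ s ∈ Icc a b, ∀ t ∈ Icc a b, |s - t| < η →
      (m/2) * |s - t| ≤ ‖α s - α t‖ := by
    intro s hs t ht hst
    set S : Set ℝ := Icc a b ∩ Ioo (t - η) (t + η) with hS
    have hconv : Convex ℝ S := (convex_Icc a b).inter (convex_Ioo _ _)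
    have hd := abs_sub_lt_iff.mp hst
    have hsS : s ∈ S := ⟨hs, by constructor <;> linarith [hd.1, hd.2]⟩
    have htS : t ∈ S := ⟨ht, by constructor <;> linarith⟩
    have hgd : ∀ x ∈ S, HasDerivWithinAt (fun u => α u - u • deriv α t)
        (deriv α x - deriv α t) S x := by
      intro x _
      exact ((hαd x).hasDerivAt.sub
        (by simpa using (hasDerivAt_id x).smul_const (deriv α t))).hasDerivWithinAt
    have hbd : ∀ x ∈ S, ‖deriv α x - deriv α t‖ ≤ m/2 := by
      intro x hx
      have hxt : dist x t < η := by
        rw [Real.dist_eq]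
        rcases hx.2 with ⟨h1, h2⟩
        rw [abs_sub_lt_iff]; constructor <;> linarith
      have := hηp x hx.1 t ht hxt
      rw [dist_eq_norm] at this
      exact this.le
    have hM := hconv.norm_image_sub_le_of_norm_hasDerivWithin_le hgd hbd htS hsS
    have key : ‖α s - s • deriv α t - (α t - t • deriv α t)‖ ≤ m/2 * ‖s - t‖ := hM
    have hrw : α s - s • deriv α t - (α t - t • deriv α t)
        = (α s - α t) - (s - t) • deriv α t := by
      rw [sub_smul]; abel
    rw [hrw, Real.norm_eq_abs] at key
    have h1 : ‖(s - t) • deriv α t‖ = |s - t| * ‖deriv α t‖ := by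
      rw [norm_smul, Real.norm_eq_abs]
    have h2 : |s - t| * m ≤ |s - t| * ‖deriv α t‖ :=
      mul_le_mul_of_nonneg_left (hmle t ht) (abs_nonneg _)
    have h3 : ‖(s - t) • deriv α t‖ ≤ ‖α s - α t‖ + ‖(α s - α t) - (s - t) • deriv α t‖ := by
      have := norm_sub_le (α s - α t) ((α s - α t) - (s - t) • deriv α t)
      simpa using this
    rw [h1] at h3
    nlinarith [norm_nonneg (α s - α t)]
  -- global separation constant
  have hcex : ∃ c > 0, ∀ s ∈ Icc a b, ∀ t ∈ Icc a b, η ≤ |s - t| → c ≤ ‖α s - α t‖ := by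
    set K : Set (ℝ × ℝ) := (Icc a b ×ˢ Icc a b) ∩ {p : ℝ × ℝ | η ≤ |p.1 - p.2|} with hK
    have hKc : IsCompact K := (isCompact_Icc.prod isCompact_Icc).inter_right
      (isClosed_le continuous_const ((continuous_fst.sub continuous_snd).abs))
    rcases K.eq_empty_or_nonempty with hKe | hKne
    · refine ⟨1, one_pos, fun s hs t ht hst => ?_⟩
      exfalso
      have hmem : (s, t) ∈ K := ⟨⟨hs, ht⟩, hst⟩
      rw [hKe] at hmem
      exact notMem_empty _ hmem
    · obtain ⟨p, hp, hpmin⟩ := hKc.exists_isMinOn hKne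
        (((hα.continuous.comp continuous_fst).sub (hα.continuous.comp continuous_snd)).norm).continuousOn
      refine ⟨‖α p.1 - α p.2‖, ?_, fun s hs t ht hst => isMinOn_iff.mp hpmin (s,t) ⟨⟨hs, ht⟩, hst⟩⟩
      have hne : p.1 ≠ p.2 := by
        intro h
        have := hp.2
        rw [mem_setOf_eq, h, sub_self, abs_zero] at this
        linarith
      have : α p.1 ≠ α p.2 := fun h => hne (hαinj hp.1.1 hp.1.2 h)
      exact norm_pos_iff.mpr (sub_ne_zero.mpr this)
  obtain ⟨c, hc0, hcb⟩ := hcex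
  set L := b - a with hLdef
  have hL : 0 ≤ L := sub_nonneg.mpr hab
  have h2L : (0:ℝ) < 2 * (L + 1) := by linarith
  set δ := min (min (m/4) (ε/(2*(L+1)))) (c/(2*(L+1))) with hδdef
  have hδ0 : 0 < δ := lt_min (lt_min (by linarith) (by positivity)) (by positivity)
  have hδm : δ ≤ m/4 := le_trans (min_le_left _ _) (min_le_left _ _)
  have hδε : δ ≤ ε/(2*(L+1)) := le_trans (min_le_left _ _) (min_le_right _ _)
  have hδc : δ ≤ c/(2*(L+1)) := min_le_right _ _
  -- Weierstrass componentwise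
  set δ' := δ / (n + 1) with hδ'def
  have hδ'0 : 0 < δ' := by positivity
  have hcomp : ∀ i : Fin n, Continuous fun t => deriv α t i := fun i =>
    (EuclideanSpace.proj (𝕜 := ℝ) i).continuous.comp hderc
  have hQex : ∀ i : Fin n, ∃ p : Polynomial ℝ, ∀ t ∈ Icc a b,
      |p.eval t - deriv α t i| < δ' := fun i =>
    exists_polynomial_near_of_continuousOn a b _ (hcomp i).continuousOn δ' hδ'0
  choose Q hQ using hQex
  set P : Fin n → Polynomial ℝ :=
    fun i => Polynomial.C ((α a) i - (antider (Q i)).eval a) + antider (Q i) with hPdef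
  have hPd : ∀ i, (P i).derivative = Q i := by
    intro i
    rw [hPdef]
    simp [antider_derivative]
  set e := EuclideanSpace.equiv (Fin n) ℝ with he
  set β : ℝ → EuclideanSpace ℝ (Fin n) := fun t => e.symm (fun i => (P i).eval t) with hβdef
  set q : ℝ → EuclideanSpace ℝ (Fin n) := fun t => e.symm (fun i => (Q i).eval t) with hqdef
  have hβeq : ∀ t, β t = fun i => (P i).eval t := fun t => rfl
  have hβd : ∀ t, HasDerivAt β (q t) t := by
    intro t
    have h1 : HasDerivAt (fun t => (fun i => (P i).eval t : Fin n → ℝ))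
        (fun i => (Q i).eval t) t := by
      rw [hasDerivAt_pi]
      intro i
      simpa [hPd i] using (P i).hasDerivAt t
    exact ((e.symm : (Fin n → ℝ) →L[ℝ] EuclideanSpace ℝ (Fin n)).hasFDerivAt.comp_hasDerivAt t h1)
  have hβderiv : ∀ t, deriv β t = q t := fun t => (hβd t).deriv
  -- norm estimate for deriv α - q
  have hqa : ∀ t ∈ Icc a b, ‖deriv α t - q t‖ < δ := by
    intro t ht
    have hb : ∀ i, |(deriv α t - q t) i| ≤ δ' := by
      intro i
      have h1 := hQ i t ht
      have h2 : (deriv α t - q t) i = deriv α t i - (Q i).eval t := rfl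
      rw [h2, abs_sub_comm]
      exact h1.le
    have h3 : ‖deriv α t - q t‖ ≤ Real.sqrt n * δ' := euc_norm_le _ hδ'0.le hb
    have h4 : Real.sqrt n < n + 1 := by
      rw [Real.sqrt_lt' (by positivity)]
      nlinarith [Nat.cast_nonneg (α := ℝ) n]
    have h5 : Real.sqrt n * δ' < (n + 1) * δ' := mul_lt_mul_of_pos_right h4 hδ'0
    have h6 : ((n:ℝ) + 1) * δ' = δ := by
      rw [hδ'def]
      field_simp
    linarith
  -- mean value estimate for α - β
  have hmvt : ∀ s ∈ Icc a b, ∀ t ∈ Icc a b,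
      ‖(α s - β s) - (α t - β t)‖ ≤ δ * |s - t| := by
    intro s hs t ht
    have hgd : ∀ x ∈ Icc a b, HasDerivWithinAt (fun u => α u - β u)
        (deriv α x - q x) (Icc a b) x :=
      fun x _ => ((hαd x).hasDerivAt.sub (hβd x)).hasDerivWithinAt
    have := (convex_Icc a b).norm_image_sub_le_of_norm_hasDerivWithin_le hgd
      (fun x hx => (hqa x hx).le) ht hs
    simpa [Real.norm_eq_abs] using this
  have hβa : β a = α a := by
    ext i
    show (P i).eval a = α a i
    rw [hPdef]
    simp
  have hclose : ∀ t ∈ Icc a b, ‖α t - β t‖ ≤ δ * L := by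
    intro t ht
    have h1 := hmvt t ht a haI
    rw [hβa, sub_self, sub_zero] at h1
    refine h1.trans ?_
    have h2 : |t - a| ≤ L := by
      rw [abs_of_nonneg (by linarith [ht.1])]
      linarith [ht.2]
    exact mul_le_mul_of_nonneg_left h2 hδ0.le
  -- injectivity
  have hinj : InjOn β (Icc a b) := by
    intro s hs t ht hst
    by_contra hne
    have hA : ‖α s - α t‖ ≤ δ * |s - t| := by
      have h1 := hmvt s hs t ht
      have h2 : (α s - β s) - (α t - β t) = α s - α t := by
        rw [hst]; abel
      rwa [h2] at h1
    have hstL : |s - t| ≤ L := by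
      rw [abs_sub_le_iff]
      constructor <;> [linarith [hs.2, ht.1]; linarith [ht.2, hs.1]]
    rcases lt_or_ge (|s - t|) η with hlt | hge
    · have h3 := hloc s hs t ht hlt
      have h0 : 0 < |s - t| := abs_pos.mpr (sub_ne_zero.mpr hne)
      nlinarith [mul_le_mul_of_nonneg_right hδm (abs_nonneg (s - t))]
    · have h3 := hcb s hs t ht hge
      have h4 : δ * |s - t| ≤ δ * L := mul_le_mul_of_nonneg_left hstL hδ0.le
      have h5 : δ * L ≤ c/(2*(L+1)) * L := mul_le_mul_of_nonneg_right hδc hL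
      have h6 : c/(2*(L+1)) * L < c := by
        rw [div_mul_eq_mul_div, div_lt_iff₀ h2L]
        nlinarith
      exact lt_irrefl c (lt_of_le_of_lt (((h3.trans hA).trans h4).trans h5) h6)
  refine ⟨P, β, hβeq, hinj, ?_, ?_⟩
  · intro t ht
    rw [hβderiv t]
    have h1 : ‖deriv α t‖ - ‖q t‖ ≤ ‖deriv α t - q t‖ := norm_sub_norm_le _ _
    have h2 : m - δ ≤ ‖q t‖ := by
      have := hmle t ht
      have := (hqa t ht).le
      linarith
    have h3 : 0 < ‖q t‖ := by linarith
    exact norm_pos_iff.mp h3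
  · intro t ht
    constructor
    · have h1 := hclose t ht
      have h2 : δ * L ≤ ε/(2*(L+1)) * L := mul_le_mul_of_nonneg_right hδε hL
      have h3 : ε/(2*(L+1)) * L < ε := by
        rw [div_mul_eq_mul_div, div_lt_iff₀ h2L]
        nlinarith
      exact lt_of_le_of_lt (h1.trans h2) h3
    · rw [hβderiv t]
      have h1 := hqa t ht
      have h2 : ε/(2*(L+1)) < ε := by
        rw [div_lt_iff₀ h2L]
        nlinarith
      linarith
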